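/- There exist a finitely generated free group F, a finitely generated subgroup H of F, and a subset S of F that is closed in the profinite topology of F, such that the product set SH = {sh : s ∈ S, h ∈ H} is not closed in the profinite topology of F. -/

import Mathlib

open scoped Pointwise


lemma two_pow_sub_one_odd (d : ℕ) (hd : 1 ≤ d) : Odd (2 ^ d - 1 : ℕ) := by
  have h1 : 1 ≤ 2 ^ d := Nat.one_le_two_pow
  have : Even (2 ^ d) := by
    rcases Nat.exists_eq_add_of_le hd with ⟨k, rfl⟩
    exact (Nat.even_pow (n := 1 + k)).2 ⟨even_two, by omega⟩
  exact Nat.Even.sub_odd h1 this odd_one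

lemma orderOf_two_zmod (d : ℕ) (hd : 2 ≤ d) : orderOf (2 : ZMod (2 ^ d - 1)) = d := by
  have h4 : (2:ℕ) ^ 2 ≤ 2 ^ d := Nat.pow_le_pow_right (by norm_num) hd
  have hb : 3 ≤ 2 ^ d - 1 := by norm_num at h4; omega
  have key : ∀ m : ℕ, 0 < m → ((2 : ZMod (2 ^ d - 1)) ^ m = 1 ↔ (2 ^ d - 1) ∣ (2 ^ m - 1)) := by
    intro m hm
    have h2 : ((2 : ℕ) : ZMod (2 ^ d - 1)) = (2 : ZMod (2 ^ d - 1)) := by push_cast; ring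
    rw [← h2, ← Nat.cast_pow,
      show (1 : ZMod (2^d-1)) = ((1:ℕ) : ZMod (2^d-1)) from by push_cast; ring,
      ZMod.natCast_eq_natCast_iff]
    constructor
    · intro h
      exact (Nat.modEq_iff_dvd' Nat.one_le_two_pow).1 h.symm
    · intro h
      exact ((Nat.modEq_iff_dvd' Nat.one_le_two_pow).2 h).symm
  rw [orderOf_eq_iff (by omega)]
  constructor
  · rw [key d (by omega)]
  · intro m hmd hm h
    rw [key m hm] at h
    have h1 : 2 ^ m < 2 ^ d := Nat.pow_lt_pow_right (by norm_num) hmd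
    have h2 : 2 ≤ 2 ^ m := by
      have : (2:ℕ) ^ 1 ≤ 2 ^ m := Nat.pow_le_pow_right (by norm_num) hm
      simpa using this
    exact absurd (Nat.le_of_dvd (by omega) h) (by omega)

lemma pow_eq_pow_dvd (d n j : ℕ) (hd : 2 ≤ d)
    (h : (2 : ZMod (2 ^ d - 1)) ^ n = 2 ^ j) : (d : ℤ) ∣ (n : ℤ) - (j : ℤ) := by
  haveI : NeZero (2 ^ d - 1) := ⟨by
    have h4 : (2:ℕ) ^ 2 ≤ 2 ^ d := Nat.pow_le_pow_right (by norm_num) hd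
    norm_num at h4; omega⟩
  have hu : IsUnit (2 : ZMod (2 ^ d - 1)) := by
    rw [show (2 : ZMod (2^d-1)) = ((2:ℕ) : ZMod (2^d-1)) from by push_cast; ring,
      ZMod.isUnit_iff_coprime]
    exact (two_pow_sub_one_odd d (by omega)).coprime_two_left
  have main : ∀ a b : ℕ, a ≤ b → (2 : ZMod (2 ^ d - 1)) ^ b = 2 ^ a → (d:ℤ) ∣ (b:ℤ) - a := by
    intro a b hab heq
    have : (2 : ZMod (2 ^ d - 1)) ^ a * 2 ^ (b - a) = 2 ^ a * 1 := by
      rw [← pow_add, mul_one]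
      rw [show a + (b - a) = b by omega, heq]
    have h1 : (2 : ZMod (2 ^ d - 1)) ^ (b - a) = 1 := by
      have := (hu.pow a).mul_left_cancel this
      simpa using this
    have h2 : d ∣ b - a := by
      rw [← orderOf_two_zmod d hd]
      exact orderOf_dvd_of_pow_eq_one h1
    have : ((b - a : ℕ) : ℤ) = (b:ℤ) - a := by omega
    exact this ▸ Int.natCast_dvd_natCast.2 h2
  rcases le_total j n with hle | hle
  · exact main j n hle h
  · have := main n j hle h.symm
    exact (dvd_sub_comm).1 this

lemma caseA (p : ℤ) (hp : ∀ j : ℕ, p ≠ 2 ^ j) :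
    ∃ m : ℕ, 0 < m ∧ ∀ n : ℕ, 1 ≤ n → (p : ZMod m) ≠ 2 ^ n := by
  set K : ℕ := p.natAbs + 3 with hK
  set m : ℕ := 2 ^ K * (2 ^ K - 1) with hm
  have h2K : (1:ℕ) ≤ 2 ^ K := Nat.one_le_two_pow
  have hKlt : K < 2 ^ K := K.lt_two_pow_self
  have hmpos : 0 < m := by
    have h4 : (2:ℕ) ^ 2 ≤ 2 ^ K := Nat.pow_le_pow_right (by norm_num) (by omega)
    have : (0:ℕ) < 2 ^ K - 1 := by norm_num at h4; omega
    positivity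
  have hmZ : (m : ℤ) = 2 ^ K * (2 ^ K - 1) := by
    push_cast [hm, h2K]; ring
  refine ⟨m, hmpos, ?_⟩
  -- L1
  have L1 : ∀ n : ℕ, 1 ≤ n → ∃ j : ℕ, 1 ≤ j ∧ j ≤ 2 * K - 1 ∧ (m:ℤ) ∣ 2 ^ n - 2 ^ j := by
    intro n hn
    by_cases hcase : n ≤ 2 * K - 1
    · exact ⟨n, hn, hcase, by simp⟩
    · have hnK : 2 * K ≤ n := by omega
      set j : ℕ := K + (n - K) % K with hj
      have hKpos : 0 < K := by omega
      refine ⟨j, by omega, by have := Nat.mod_lt (n - K) hKpos; omega, ?_⟩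
      set s : ℕ := (n - K) / K with hs
      have h0 : K * s + (n - K) % K = n - K := Nat.div_add_mod (n - K) K
      have hns : n = j + K * s := by omega
      have : (2:ℤ) ^ n - 2 ^ j = 2 ^ j * ((2 ^ K) ^ s - 1) := by
        rw [hns, pow_add, pow_mul]; ring
      rw [this, hmZ]
      apply mul_dvd_mul
      · exact pow_dvd_pow 2 (by omega)
      · have := sub_dvd_pow_sub_pow ((2:ℤ) ^ K) 1 s
        simpa using this
  -- L2
  have L2 : ∀ j : ℕ, 1 ≤ j → j ≤ 2 * K - 1 → (p : ZMod m) ≠ 2 ^ j := by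
    intro j hj1 hj2 heq
    have hdvd : (m:ℤ) ∣ p - 2 ^ j := by
      rw [← ZMod.intCast_zmod_eq_zero_iff_dvd]
      push_cast
      rw [heq]; ring
    have hne : p - 2 ^ j ≠ 0 := sub_ne_zero.2 (hp j)
    have hlt : |p - 2 ^ j| < (m:ℤ) := by
      have hpabs : |p| < 2 ^ K := by
        rw [Int.abs_eq_natAbs]
        have : (p.natAbs : ℤ) < (2:ℤ) ^ K := by exact_mod_cast (by omega : p.natAbs < 2 ^ K).trans_le (le_refl _)
        exact this
      have h2j : (2:ℤ) ^ j ≤ 2 ^ (2 * K - 1) := pow_le_pow_right₀ (by norm_num) (by omega)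
      have hbig : (2:ℤ) ^ K + 2 ^ (2 * K - 1) < (m:ℤ) := by
        rw [hmZ]
        have e1 : (2:ℤ) ^ K * (2 ^ K - 1) = 2 ^ (2 * K) - 2 ^ K := by
          rw [two_mul, pow_add]; ring
        rw [e1]
        have e2 : (2:ℤ) ^ (2 * K) = 2 * 2 ^ (2 * K - 1) := by
          conv_lhs => rw [show 2 * K = (2 * K - 1) + 1 by omega]
          rw [pow_succ]; ring
        have e3 : (2:ℤ) ^ (K + 2) ≤ 2 ^ (2 * K - 1) := pow_le_pow_right₀ (by norm_num) (by omega)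
        have e4 : (2:ℤ) ^ (K + 2) = 4 * 2 ^ K := by rw [pow_add]; ring
        nlinarith [pow_pos (by norm_num : (0:ℤ) < 2) K, pow_pos (by norm_num : (0:ℤ) < 2) (2*K-1)]
      calc |p - 2 ^ j| ≤ |p| + |(2:ℤ) ^ j| := abs_sub _ _
        _ = |p| + 2 ^ j := by rw [abs_of_nonneg (by positivity : (0:ℤ) ≤ 2 ^ j)]
        _ < 2 ^ K + 2 ^ (2 * K - 1) := by omega
        _ < m := hbig
    have := Int.le_of_dvd (abs_pos.2 hne) ((dvd_abs _ _).2 hdvd)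
    omega
  intro n hn heq
  obtain ⟨j, hj1, hj2, hdvd⟩ := L1 n hn
  have h2 : ((2:ℤ) ^ n : ZMod m) = ((2:ℤ) ^ j : ZMod m) := by
    have : (((2:ℤ) ^ n - 2 ^ j : ℤ) : ZMod m) = 0 :=
      (ZMod.intCast_zmod_eq_zero_iff_dvd _ _).2 hdvd
    push_cast at this ⊢
    linear_combination this
  exact L2 j hj1 hj2 (by push_cast at h2 ⊢; rw [heq, h2])

lemma key_sep (p q : ℤ) (h : ¬ ∃ n : ℕ, 1 ≤ n ∧ p = 2 ^ n ∧ q = (n:ℤ)) :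
    ∃ m₁ m₂ : ℕ, 0 < m₁ ∧ 0 < m₂ ∧
      ∀ n : ℕ, 1 ≤ n → ¬ ((p : ZMod m₁) = 2 ^ n ∧ (q : ZMod m₂) = (n : ZMod m₂)) := by
  by_cases hp : ∃ j : ℕ, p = 2 ^ j
  · obtain ⟨j, rfl⟩ := hp
    by_cases hq : q = (j : ℤ)
    · subst hq
      have hj0 : j = 0 := by
        by_contra hj
        exact h ⟨j, by omega, rfl, rfl⟩
      subst hj0
      refine ⟨4, 1, by norm_num, by norm_num, ?_⟩
      intro n hn ⟨h1, _⟩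
      push_cast at h1
      obtain ⟨k, rfl⟩ := Nat.exists_eq_add_of_le hn
      rcases k with _ | l
      · revert h1; decide
      · rw [show 1 + (l + 1) = l + 2 by ring, pow_add,
          show (2:ZMod 4) ^ 2 = 0 by decide, mul_zero] at h1
        revert h1; decide
    · set d : ℕ := (q - (j:ℤ)).natAbs + 1 with hd
      have hd2 : 2 ≤ d := by
        have : (q - (j:ℤ)).natAbs ≠ 0 := by
          intro h0
          exact hq (by omega)
        omega
      have hnd : ¬ ((d:ℤ) ∣ q - (j:ℤ)) := by
        intro hdvd
        have h1 : q - (j:ℤ) ≠ 0 := sub_ne_zero.2 hq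
        have := Int.le_of_dvd (abs_pos.2 h1) ((dvd_abs _ _).2 hdvd)
        rw [Int.abs_eq_natAbs] at this
        omega
      have hm1pos : 0 < 2 ^ d - 1 := by
        have : (2:ℕ) ^ 1 ≤ 2 ^ d := Nat.pow_le_pow_right (by norm_num) (by omega)
        simp at this; omega
      refine ⟨2 ^ d - 1, d, hm1pos, by omega, ?_⟩
      intro n hn ⟨h1, h2⟩
      push_cast at h1
      have hdvd1 : (d:ℤ) ∣ (n:ℤ) - (j:ℤ) := pow_eq_pow_dvd d n j hd2 h1.symm
      have hdvd2 : (d:ℤ) ∣ q - (n:ℤ) := by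
        rw [← ZMod.intCast_zmod_eq_zero_iff_dvd]
        push_cast
        rw [h2]; ring
      exact hnd (by have := dvd_add hdvd2 hdvd1; simpa using this)
  · push_neg at hp
    obtain ⟨m, hmpos, hm⟩ := caseA p hp
    refine ⟨m, 1, hmpos, by norm_num, ?_⟩
    intro n hn ⟨h1, _⟩
    exact hm n hn h1


noncomputable def phi2 : FreeGroup (Fin 2) →* Multiplicative (ℤ × ℤ) :=
  FreeGroup.lift (fun i => Multiplicative.ofAdd (if i = 0 then ((1:ℤ), (0:ℤ)) else (0, 1)))

lemma phi2_of0 : phi2 (FreeGroup.of 0) = Multiplicative.ofAdd ((1:ℤ), (0:ℤ)) := by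
  simp [phi2]

lemma phi2_of1 : phi2 (FreeGroup.of 1) = Multiplicative.ofAdd ((0:ℤ), (1:ℤ)) := by
  simp [phi2]

lemma phi2_zpow0 (k : ℤ) :
    Multiplicative.toAdd (phi2 ((FreeGroup.of 0) ^ k)) = (k, 0) := by
  rw [map_zpow, phi2_of0]
  simp [Prod.smul_def]

lemma phi2_pow1 (k : ℕ) :
    Multiplicative.toAdd (phi2 ((FreeGroup.of 1) ^ k)) = (0, (k:ℤ)) := by
  rw [map_pow, phi2_of1]
  simp [Prod.smul_def]

def Sset : Set (FreeGroup (Fin 2)) :=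
  {x | ∃ n : ℕ, 1 ≤ n ∧ Multiplicative.toAdd (phi2 x) = ((2:ℤ) ^ n, (n:ℤ))}

def Hgrp : Subgroup (FreeGroup (Fin 2)) := Subgroup.zpowers (FreeGroup.of 0)

lemma mem_SH (x : FreeGroup (Fin 2)) :
    x ∈ Sset * (Hgrp : Set (FreeGroup (Fin 2))) ↔
      1 ≤ (Multiplicative.toAdd (phi2 x)).2 := by
  constructor
  · rintro ⟨s, hs, h, hh, rfl⟩
    obtain ⟨n, hn, hsn⟩ := hs
    obtain ⟨k, rfl⟩ := Subgroup.mem_zpowers_iff.1 hh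
    rw [map_mul]
    simp only [toAdd_mul, Prod.snd_add, hsn, phi2_zpow0]
    simpa using by exact_mod_cast hn
  · intro hx
    set p : ℤ := (Multiplicative.toAdd (phi2 x)).1 with hp
    set q : ℤ := (Multiplicative.toAdd (phi2 x)).2 with hq
    set n : ℕ := q.toNat with hn
    have hqn : (n : ℤ) = q := Int.toNat_of_nonneg (by omega)
    refine ⟨x * (FreeGroup.of 0) ^ ((2:ℤ) ^ n - p), ⟨n, by omega, ?_⟩,
      (FreeGroup.of 0) ^ (p - (2:ℤ) ^ n), Subgroup.zpow_mem_zpowers _ _, ?_⟩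
    · rw [map_mul]
      simp only [toAdd_mul, phi2_zpow0]
      ext
      · simp [← hp]
      · simp [← hq, hqn]
    · show x * FreeGroup.of 0 ^ ((2:ℤ) ^ n - p) * FreeGroup.of 0 ^ (p - (2:ℤ) ^ n) = x
      rw [mul_assoc, ← zpow_add]
      simp

/-- A subset `C` of a group is closed in the profinite topology iff every point
outside `C` is separated from `C` by a coset of a finite-index normal subgroup. -/
def IsPTClosed {G : Type*} [Group G] (C : Set G) : Prop :=
  ∀ x : G, x ∉ C → ∃ N : Subgroup G, N.Normal ∧ N.FiniteIndex ∧
    (x • (N : Set G)) ∩ C = ∅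

lemma Sset_closed : IsPTClosed Sset := by
  intro x hx
  set p : ℤ := (Multiplicative.toAdd (phi2 x)).1 with hp
  set q : ℤ := (Multiplicative.toAdd (phi2 x)).2 with hq
  obtain ⟨m₁, m₂, hm₁, hm₂, hsep⟩ := key_sep p q (by
    rintro ⟨n, hn, hp', hq'⟩
    exact hx ⟨n, hn, by rw [Prod.ext_iff]; exact ⟨hp', hq'⟩⟩)
  haveI : NeZero m₁ := ⟨hm₁.ne'⟩
  haveI : NeZero m₂ := ⟨hm₂.ne'⟩
  set r : (ℤ × ℤ) →+ (ZMod m₁ × ZMod m₂) :=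
    (Int.castAddHom (ZMod m₁)).prodMap (Int.castAddHom (ZMod m₂)) with hr
  set ψ : FreeGroup (Fin 2) →* Multiplicative (ZMod m₁ × ZMod m₂) :=
    (AddMonoidHom.toMultiplicative r).comp phi2 with hψdef
  refine ⟨ψ.ker, inferInstance, inferInstance, ?_⟩
  rw [Set.eq_empty_iff_forall_notMem]
  rintro y ⟨hy1, hy2⟩
  rw [Set.mem_smul_set_iff_inv_smul_mem, smul_eq_mul] at hy1
  have hker : ψ (x⁻¹ * y) = 1 := hy1
  have hψeq : ψ x = ψ y := by
    rw [map_mul, map_inv] at hker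
    exact inv_mul_eq_one.1 hker
  have hcomp : ∀ z : FreeGroup (Fin 2), Multiplicative.toAdd (ψ z) =
      (((Multiplicative.toAdd (phi2 z)).1 : ZMod m₁),
       ((Multiplicative.toAdd (phi2 z)).2 : ZMod m₂)) := fun z => rfl
  obtain ⟨n, hn, hyn⟩ := hy2
  have h2 := congrArg Multiplicative.toAdd hψeq
  rw [hcomp, hcomp, hyn] at h2
  rw [Prod.ext_iff] at h2
  obtain ⟨h2a, h2b⟩ := h2
  simp only [Prod.fst, Prod.snd] at h2a h2b
  refine hsep n hn ⟨?_, ?_⟩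
  · have h3 : ((p : ℤ) : ZMod m₁) = (((2:ℤ) ^ n : ℤ) : ZMod m₁) := by
      simpa [← hp] using h2a
    rw [h3]; push_cast; ring
  · have h3 : ((q : ℤ) : ZMod m₂) = (((n : ℤ)) : ZMod m₂) := by
      simpa [← hq] using h2b
    rw [h3]; push_cast; ring

lemma SH_not_closed : ¬ IsPTClosed (Sset * (Hgrp : Set (FreeGroup (Fin 2)))) := by
  intro hcl
  have h1 : (1 : FreeGroup (Fin 2)) ∉ Sset * (Hgrp : Set (FreeGroup (Fin 2))) := by
    rw [mem_SH]
    simp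
  obtain ⟨N, hN, hFI, hEmpty⟩ := hcl 1 h1
  haveI := hN
  haveI := hFI
  have hg : (FreeGroup.of 1) ^ N.index ∈ N := Subgroup.pow_index_mem N _
  have hg2 : (FreeGroup.of 1) ^ N.index ∈ Sset * (Hgrp : Set (FreeGroup (Fin 2))) := by
    rw [mem_SH, phi2_pow1]
    have := hFI.index_ne_zero
    simp only []
    exact_mod_cast Nat.one_le_iff_ne_zero.2 this
  rw [Set.eq_empty_iff_forall_notMem] at hEmpty
  exact hEmpty ((FreeGroup.of 1) ^ N.index) ⟨by rw [one_smul]; exact hg, hg2⟩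

/-- There exist a finitely generated free group `F`, a finitely generated subgroup
`H` of `F`, and a subset `S` of `F` closed in the profinite topology of `F`, such
that the product set `S * H` is not closed in the profinite topology of `F`. -/
theorem exists_fg_subgroup_and_closed_set_with_product_not_closed :
    ∃ (n : ℕ) (H : Subgroup (FreeGroup (Fin n))) (S : Set (FreeGroup (Fin n))),
      H.FG ∧ IsPTClosed S ∧
      ¬ IsPTClosed (S * (H : Set (FreeGroup (Fin n)))) := by
  refine ⟨2, Hgrp, Sset, ?_, Sset_closed, SH_not_closed⟩
  exact ⟨{FreeGroup.of 0}, by simp [Hgrp, ← Subgroup.zpowers_eq_closure]⟩
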